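/- Let G be a group and Z a subgroup of the center of G of finite index, and let χ : Z → ℂˣ be a group homomorphism. Let W be the ℂ-vector space of all functions f : G → ℂ satisfying f(x·z) = χ(z)⁻¹ · f(x) for all x ∈ G and z ∈ Z, and for s ∈ G let T_s : W → W be the linear operator (T_s f)(x) = f(s⁻¹·x). If s ∉ Z, then the trace of T_s equals 0. -/

import Mathlib

/-- The space `W` of functions `f : G → ℂ` with `f (x z) = χ(z)⁻¹ f x` for `z ∈ Z`,
realizing the representation of `G` induced from the character `χ` of `Z`. -/
noncomputable def inducedSpace {G : Type*} [Group G] (Z : Subgroup G) (χ : Z →* ℂˣ) :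
    Submodule ℂ (G → ℂ) where
  carrier := {f | ∀ (x : G) (z : Z), f (x * (z : G)) = ((χ z : ℂˣ) : ℂ)⁻¹ * f x}
  add_mem' := by
    intro a b ha hb x z
    simp only [Pi.add_apply, ha x z, hb x z]
    ring
  zero_mem' := by
    intro x z
    simp
  smul_mem' := by
    intro c a ha x z
    simp only [Pi.smul_apply, smul_eq_mul, ha x z]
    ring

/-- The left-translation operator `(T_s f)(x) = f (s⁻¹ x)` on the induced space. -/
noncomputable def translationOp {G : Type*} [Group G] (Z : Subgroup G) (χ : Z →* ℂˣ) (s : G) :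
    inducedSpace Z χ →ₗ[ℂ] inducedSpace Z χ where
  toFun f := ⟨fun x => (f : G → ℂ) (s⁻¹ * x), by
    intro x z
    have h := f.2 (s⁻¹ * x) z
    simpa [mul_assoc] using h⟩
  map_add' := by
    intro a b
    apply Subtype.ext
    funext x
    rfl
  map_smul' := by
    intro c a
    apply Subtype.ext
    funext x
    rfl

section Aux

variable {G : Type*} [Group G] (Z : Subgroup G) (χ : Z →* ℂˣ)

theorem out_inv_mul_mem (x : G) : ((QuotientGroup.mk x : G ⧸ Z).out)⁻¹ * x ∈ Z :=
  (QuotientGroup.eq).mp (Quotient.out_eq _)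

/-- From coefficients on cosets to a function in the induced space. -/
noncomputable def fromPi : (G ⧸ Z → ℂ) →ₗ[ℂ] inducedSpace Z χ where
  toFun c := ⟨fun x => ((χ ⟨_, out_inv_mul_mem Z x⟩ : ℂˣ) : ℂ)⁻¹ * c (QuotientGroup.mk x), by
    intro x z
    have hq : (QuotientGroup.mk (x * (z : G)) : G ⧸ Z) = QuotientGroup.mk x := by
      apply (QuotientGroup.eq).mpr
      simpa using Z.inv_mem z.2
    have hz : (⟨_, out_inv_mul_mem Z (x * (z : G))⟩ : Z)
        = ⟨_, out_inv_mul_mem Z x⟩ * z := by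
      apply Subtype.ext
      simp [hq, mul_assoc]
    show ((χ ⟨_, out_inv_mul_mem Z (x * (z : G))⟩ : ℂˣ) : ℂ)⁻¹ * c (QuotientGroup.mk (x * (z : G)))
        = ((χ z : ℂˣ) : ℂ)⁻¹ *
          (((χ ⟨_, out_inv_mul_mem Z x⟩ : ℂˣ) : ℂ)⁻¹ * c (QuotientGroup.mk x))
    rw [hz, hq, map_mul]
    push_cast
    ring⟩
  map_add' := by intro a b; apply Subtype.ext; funext x; simp [Pi.add_apply]; ring
  map_smul' := by intro c a; apply Subtype.ext; funext x; simp [Pi.smul_apply]; ring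

/-- Evaluation at coset representatives. -/
noncomputable def toPi : inducedSpace Z χ →ₗ[ℂ] (G ⧸ Z → ℂ) where
  toFun f := fun q => (f : G → ℂ) q.out
  map_add' := by intro a b; rfl
  map_smul' := by intro c a; rfl

noncomputable def piEquiv : inducedSpace Z χ ≃ₗ[ℂ] (G ⧸ Z → ℂ) :=
  LinearEquiv.ofLinear (toPi Z χ) (fromPi Z χ)
    (by
      ext c q
      simp only [toPi, fromPi, LinearMap.coe_comp, Function.comp_apply, LinearMap.coe_mk,
        AddHom.coe_mk, LinearMap.id_apply]
      have h1 : (QuotientGroup.mk q.out : G ⧸ Z) = q := Quotient.out_eq q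
      have h2 : (⟨_, out_inv_mul_mem Z q.out⟩ : Z) = 1 := by
        apply Subtype.ext
        simp [h1]
      rw [h2, h1]
      simp)
    (by
      ext f x
      simp only [fromPi, toPi, LinearMap.coe_comp, Function.comp_apply, LinearMap.coe_mk,
        AddHom.coe_mk, LinearMap.id_apply]
      have key := f.2 ((QuotientGroup.mk x : G ⧸ Z).out) ⟨_, out_inv_mul_mem Z x⟩
      simp only [mul_inv_cancel_left] at key
      rw [key])

end Aux

/-- If `Z` is a central subgroup of finite index of `G`, `χ : Z → ℂˣ` a character and
`s ∉ Z`, then the trace of the translation operator `T_s` on the induced space is `0`. -/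
theorem stmt_12 {G : Type*} [Group G] (Z : Subgroup G) (hZ : Z ≤ Subgroup.center G)
    [Subgroup.FiniteIndex Z] (χ : Z →* ℂˣ) (s : G) (hs : s ∉ Z) :
    LinearMap.trace ℂ (inducedSpace Z χ) (translationOp Z χ s) = 0 := by
  classical
  have : Finite (G ⧸ Z) := Subgroup.finite_quotient_of_finiteIndex (H := Z)
  have : Fintype (G ⧸ Z) := Fintype.ofFinite _
  set e := piEquiv Z χ
  rw [← LinearMap.trace_conj' (translationOp Z χ s) e]
  rw [LinearMap.trace_eq_matrix_trace ℂ (Pi.basisFun ℂ (G ⧸ Z))]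
  rw [Matrix.trace]
  apply Finset.sum_eq_zero
  intro q _
  rw [Matrix.diag_apply, LinearMap.toMatrix_apply]
  have key : (e.conj (translationOp Z χ s)) ((Pi.basisFun ℂ (G ⧸ Z)) q) q = 0 := by
    have hne : (QuotientGroup.mk (s⁻¹ * q.out) : G ⧸ Z) ≠ q := by
      intro h
      apply hs
      have h1 : (QuotientGroup.mk (s⁻¹ * q.out) : G ⧸ Z) = QuotientGroup.mk q.out := by
        rw [h]; exact (Quotient.out_eq q).symm
      have h2 : (s⁻¹ * q.out)⁻¹ * q.out ∈ Z := (QuotientGroup.eq).mp h1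
      have h3 : (q.out)⁻¹ * s * q.out ∈ Z := by simpa [mul_assoc] using h2
      have h4 := hZ h3
      rw [Subgroup.mem_center_iff] at h4
      have h5 := h4 q.out
      have h7 : q.out * ((q.out)⁻¹ * s * q.out) * (q.out)⁻¹ = s := by group
      rw [h5] at h7
      have h8 : (q.out)⁻¹ * s * q.out = s := by
        have := h7
        rw [mul_assoc, mul_inv_cancel, mul_one] at this
        exact this
      rw [← h8]
      exact h3
    simp only [LinearEquiv.conj_apply, LinearMap.coe_comp, Function.comp_apply,
      LinearEquiv.coe_coe]
    show (toPi Z χ) (translationOp Z χ s (e.symm ((Pi.basisFun ℂ (G ⧸ Z)) q))) q = 0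
    simp only [toPi, translationOp, LinearMap.coe_mk, AddHom.coe_mk]
    show ((e.symm ((Pi.basisFun ℂ (G ⧸ Z)) q) : G → ℂ)) (s⁻¹ * q.out) = 0
    have hsymm : e.symm ((Pi.basisFun ℂ (G ⧸ Z)) q) = fromPi Z χ ((Pi.basisFun ℂ (G ⧸ Z)) q) := rfl
    rw [hsymm]
    simp only [fromPi, LinearMap.coe_mk, AddHom.coe_mk]
    show ((χ _ : ℂˣ) : ℂ)⁻¹ * ((Pi.basisFun ℂ (G ⧸ Z)) q) (QuotientGroup.mk (s⁻¹ * q.out)) = 0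
    rw [Pi.basisFun_apply, Pi.single_apply, if_neg hne]
    ring
  rw [Pi.basisFun_repr, key]
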